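/- Let H : ℝ^d → ℝ be twice continuously differentiable. Then there exists a function H̃ : ℝ^d × ℝ^d → ℝ such that for all x, y ∈ ℝ^d, the map y ↦ H̃(x,y) is differentiable and its gradient with respect to the second argument equals the AVF discrete gradient: ∇₂H̃(x,y) = ∇̄_AVF H(x,y) = ∫₀¹ ∇H((1−ξ)x + ξy) dξ. -/

import Mathlib

open scoped RealInnerProductSpace
open MeasureTheory Metric InnerProductSpace

/-- **Corollary 1.** The AVF discrete gradient is, in its second argument, the
gradient of a function `H̃ : ℝ^d × ℝ^d → ℝ`. -/
theorem avf_discrete_gradient_is_gradient_field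
    (d : ℕ) (H : EuclideanSpace ℝ (Fin d) → ℝ) (hH : ContDiff ℝ 2 H) :
    ∃ Ht : EuclideanSpace ℝ (Fin d) → EuclideanSpace ℝ (Fin d) → ℝ,
      ∀ x y : EuclideanSpace ℝ (Fin d),
        HasGradientAt (Ht x) (∫ ξ in (0:ℝ)..1, gradient H ((1 - ξ) • x + ξ • y)) y := by
  have hHd : Differentiable ℝ H := hH.differentiable two_ne_zero
  have hfc : Continuous (fderiv ℝ H) := hH.continuous_fderiv two_ne_zero
  refine ⟨fun x y => ∫ ξ in Set.Ioc (0:ℝ) 1, ξ⁻¹ * (H ((1-ξ) • x + ξ • y) - H x), fun x y₀ => ?_⟩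
  rw [hasGradientAt_iff_hasFDerivAt]
  set μ : Measure ℝ := volume.restrict (Set.Ioc (0:ℝ) 1)
  set c : EuclideanSpace ℝ (Fin d) → ℝ → EuclideanSpace ℝ (Fin d) := fun y ξ => (1-ξ) • x + ξ • y with hc
  set F : EuclideanSpace ℝ (Fin d) → ℝ → ℝ := fun y ξ => ξ⁻¹ * (H (c y ξ) - H x) with hF
  set F' : ℝ → EuclideanSpace ℝ (Fin d) →L[ℝ] ℝ := fun ξ => fderiv ℝ H (c y₀ ξ) with hF'
  set R : ℝ := ‖x‖ + ‖y₀‖ + 1 with hR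
  obtain ⟨M, hM⟩ : ∃ M, ∀ z ∈ closedBall (0:EuclideanSpace ℝ (Fin d)) R, ‖fderiv ℝ H z‖ ≤ M :=
    (isCompact_closedBall (0:EuclideanSpace ℝ (Fin d)) R).exists_bound_of_continuousOn hfc.continuousOn
  have hM0 : 0 ≤ M := le_trans (norm_nonneg _) (hM 0 (mem_closedBall_self (by positivity)))
  -- membership of convex combinations in the big ball
  have hmem : ∀ ξ ∈ Set.Icc (0:ℝ) 1, ∀ y ∈ closedBall y₀ 1, c y ξ ∈ closedBall (0:EuclideanSpace ℝ (Fin d)) R := by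
    intro ξ hξ y hy
    have hyn : ‖y‖ ≤ ‖y₀‖ + 1 := by
      have h := mem_closedBall_iff_norm.mp hy
      have h2 : ‖y‖ ≤ ‖y - y₀‖ + ‖y₀‖ := by simpa using norm_add_le (y - y₀) y₀
      linarith
    simp only [mem_closedBall_iff_norm, sub_zero, hc]
    calc ‖(1-ξ) • x + ξ • y‖ ≤ ‖(1-ξ) • x‖ + ‖ξ • y‖ := norm_add_le _ _
      _ = (1-ξ) * ‖x‖ + ξ * ‖y‖ := by
          rw [norm_smul, norm_smul, Real.norm_of_nonneg (by linarith [hξ.2]),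
            Real.norm_of_nonneg hξ.1]
      _ ≤ 1 * ‖x‖ + 1 * (‖y₀‖ + 1) := by
          have h1 : (1-ξ) * ‖x‖ ≤ 1 * ‖x‖ :=
            mul_le_mul_of_nonneg_right (by linarith [hξ.1]) (norm_nonneg _)
          have h2 : ξ * ‖y‖ ≤ 1 * (‖y₀‖ + 1) :=
            mul_le_mul hξ.2 hyn (norm_nonneg _) one_pos.le
          linarith
      _ = R := by ring
  have hxmem : x ∈ closedBall (0:EuclideanSpace ℝ (Fin d)) R := by
    simp only [mem_closedBall_iff_norm, sub_zero]
    have := norm_nonneg y₀; linarith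
  -- Lipschitz estimate for H on the ball
  have hlipH : ∀ a ∈ closedBall (0:EuclideanSpace ℝ (Fin d)) R, ∀ b ∈ closedBall (0:EuclideanSpace ℝ (Fin d)) R,
      ‖H a - H b‖ ≤ M * ‖a - b‖ := by
    intro a ha b hb
    exact (convex_closedBall (0:EuclideanSpace ℝ (Fin d)) R).norm_image_sub_le_of_norm_fderiv_le
      (fun z _ => hHd z)
      (fun z hz => hM z hz) hb ha
  -- key pointwise facts for ξ ∈ Ioc 0 1
  have key : ∀ ξ ∈ Set.Ioc (0:ℝ) 1,
      (∀ y ∈ ball y₀ 1, ‖F y ξ - F y₀ ξ‖ ≤ M * ‖y - y₀‖) ∧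
      HasFDerivAt (F · ξ) (F' ξ) y₀ := by
    intro ξ hξ
    have hξ0 : ξ ≠ 0 := ne_of_gt hξ.1
    have hξI : ξ ∈ Set.Icc (0:ℝ) 1 := ⟨hξ.1.le, hξ.2⟩
    constructor
    · intro y hy
      have h1 : c y ξ ∈ closedBall (0:EuclideanSpace ℝ (Fin d)) R := hmem ξ hξI y (ball_subset_closedBall hy)
      have h2 : c y₀ ξ ∈ closedBall (0:EuclideanSpace ℝ (Fin d)) R :=
        hmem ξ hξI y₀ (mem_closedBall_self one_pos.le)
      have hd : c y ξ - c y₀ ξ = ξ • (y - y₀) := by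
        simp only [hc]; module
      have := hlipH _ h1 _ h2
      rw [hd, norm_smul, Real.norm_of_nonneg hξ.1.le] at this
      calc ‖F y ξ - F y₀ ξ‖ = ‖ξ⁻¹ * (H (c y ξ) - H (c y₀ ξ))‖ := by
            simp only [hF]; ring_nf
        _ = ξ⁻¹ * ‖H (c y ξ) - H (c y₀ ξ)‖ := by
            rw [norm_mul, Real.norm_of_nonneg (inv_nonneg.mpr hξ.1.le)]
        _ ≤ ξ⁻¹ * (M * (ξ * ‖y - y₀‖)) := by
            exact mul_le_mul_of_nonneg_left this (inv_nonneg.mpr hξ.1.le)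
        _ = M * ‖y - y₀‖ := by field_simp
    · have hc' : HasFDerivAt (fun y => c y ξ) (ξ • ContinuousLinearMap.id ℝ (EuclideanSpace ℝ (Fin d))) y₀ := by
        simpa [hc] using ((hasFDerivAt_id y₀).const_smul ξ).const_add ((1-ξ) • x)
      have hcomp : HasFDerivAt (fun y => H (c y ξ))
          ((fderiv ℝ H (c y₀ ξ)).comp (ξ • ContinuousLinearMap.id ℝ (EuclideanSpace ℝ (Fin d)))) y₀ :=
        (hHd (c y₀ ξ)).hasFDerivAt.comp y₀ hc'
      have := ((hcomp.sub_const (H x)).const_mul ξ⁻¹)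
      refine this.congr_fderiv ?_
      ext v
      simp [hF', ContinuousLinearMap.smul_apply, smul_smul, inv_mul_cancel₀ hξ0]
  have μae : ∀ᵐ ξ ∂μ, ξ ∈ Set.Ioc (0:ℝ) 1 := ae_restrict_mem measurableSet_Ioc
  -- measurability of F y
  have hFcont : ∀ y : EuclideanSpace ℝ (Fin d), ContinuousOn (F y) (Set.Ioc (0:ℝ) 1) := by
    intro y
    apply ContinuousOn.mul
    · exact continuousOn_inv₀.mono (fun ξ hξ => by simp [ne_of_gt hξ.1])
    · exact ((hH.continuous.comp (by fun_prop)).sub continuous_const).continuousOn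
  have hF_meas : ∀ y ∈ ball y₀ 1, AEStronglyMeasurable (F y) μ := fun y _ =>
    (hFcont y).aestronglyMeasurable measurableSet_Ioc
  -- integrability of F y₀
  have hF_int : Integrable (F y₀) μ := by
    refine Integrable.mono' (integrable_const (M * ‖y₀ - x‖))
      ((hFcont y₀).aestronglyMeasurable measurableSet_Ioc) ?_
    filter_upwards [μae] with ξ hξ
    have h2 : c y₀ ξ ∈ closedBall (0:EuclideanSpace ℝ (Fin d)) R :=
      hmem ξ ⟨hξ.1.le, hξ.2⟩ y₀ (mem_closedBall_self one_pos.le)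
    have hd : c y₀ ξ - x = ξ • (y₀ - x) := by simp only [hc]; module
    have := hlipH _ h2 _ hxmem
    rw [hd, norm_smul, Real.norm_of_nonneg hξ.1.le] at this
    calc ‖F y₀ ξ‖ = ξ⁻¹ * ‖H (c y₀ ξ) - H x‖ := by
          rw [hF, norm_mul, Real.norm_of_nonneg (inv_nonneg.mpr hξ.1.le)]
      _ ≤ ξ⁻¹ * (M * (ξ * ‖y₀ - x‖)) :=
          mul_le_mul_of_nonneg_left this (inv_nonneg.mpr hξ.1.le)
      _ = M * ‖y₀ - x‖ := by
          have hξ0 : ξ ≠ 0 := ne_of_gt hξ.1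
          field_simp
  have hF'_meas : AEStronglyMeasurable F' μ :=
    ((hfc.comp (by fun_prop)).aestronglyMeasurable).restrict
  have h_lip : ∀ᵐ ξ ∂μ, ∀ y ∈ ball y₀ 1, ‖F y ξ - F y₀ ξ‖ ≤ M * ‖y - y₀‖ := by
    filter_upwards [μae] with ξ hξ; exact (key ξ hξ).1
  have h_diff : ∀ᵐ ξ ∂μ, HasFDerivAt (F · ξ) (F' ξ) y₀ := by
    filter_upwards [μae] with ξ hξ; exact (key ξ hξ).2
  have main := (hasFDerivAt_integral_of_dominated_loc_of_lip' (ball_mem_nhds y₀ one_pos) hF_meas hF_int hF'_meas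
    (Filter.Eventually.mono h_lip (fun ξ h y hy => by
      simpa [mul_comm] using h y hy)) (integrable_const M) h_diff).2
  -- identify the derivative with the dual of the interval integral of gradients
  have heq : (∫ ξ, F' ξ ∂μ) =
      (toDual ℝ (EuclideanSpace ℝ (Fin d))) (∫ ξ in (0:ℝ)..1, gradient H ((1 - ξ) • x + ξ • y₀)) := by
    rw [intervalIntegral.integral_of_le zero_le_one]
    have h2 := (toDual ℝ (EuclideanSpace ℝ (Fin d))).toLinearIsometry.integral_comp_comm
      (μ := μ) (fun ξ => gradient H (c y₀ ξ))
    simp only [LinearIsometryEquiv.coe_toLinearIsometry] at h2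
    rw [← h2]
    refine integral_congr_ae (Filter.Eventually.of_forall fun ξ => ?_)
    show F' ξ = toDual ℝ (EuclideanSpace ℝ (Fin d)) (gradient H (c y₀ ξ))
    simp [hF', gradient]
  rw [← heq]
  exact main
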